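/- arXiv:1501.04241 — 3 statements merged into one kernel-verified Lean document; each statement's English description precedes it below -/
import Mathlib

section
/- Fix a right-of-way parameter p ∈ (0,1) and nonnegative reals D₄, D₅ and S₆, let K = {(x,y) ∈ ℝ² : 0 ≤ x ≤ D₄, 0 ≤ y ≤ D₅, x + y ≤ S₆}, let Ω be the set of maximizers of x + y over K, and let R = {(x,y) ∈ ℝ² : x ≥ 0, y ≥ 0, (1−p)·x = p·y}. Then there exists a unique point (x*, y*) ∈ Ω minimizing the Euclidean distance to the set R over Ω, where the distance from a point z to R is inf{‖z − w‖₂ : w ∈ R}. -/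
/-- The feasible set of the merge junction model. -/
def mergeK (D4 D5 S6 : ℝ) : Set (ℝ × ℝ) :=
  {z | 0 ≤ z.1 ∧ z.1 ≤ D4 ∧ 0 ≤ z.2 ∧ z.2 ≤ D5 ∧ z.1 + z.2 ≤ S6}

/-- The set of maximizers of the total flow `x + y` over the feasible set. -/
def mergeOmega (D4 D5 S6 : ℝ) : Set (ℝ × ℝ) :=
  {z ∈ mergeK D4 D5 S6 | ∀ w ∈ mergeK D4 D5 S6, w.1 + w.2 ≤ z.1 + z.2}

/-- The priority ray `R = {(x,y) : x ≥ 0, y ≥ 0, (1 − p)·x = p·y}`. -/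
def priorityRay (p : ℝ) : Set (ℝ × ℝ) :=
  {z | 0 ≤ z.1 ∧ 0 ≤ z.2 ∧ (1 - p) * z.1 = p * z.2}

/-- The Euclidean distance between two points of the plane. -/
noncomputable def euclDist (z w : ℝ × ℝ) : ℝ :=
  Real.sqrt ((z.1 - w.1) ^ 2 + (z.2 - w.2) ^ 2)

/-- The Euclidean distance from a point to a set, `inf {‖z − w‖₂ : w ∈ R}`. -/
noncomputable def euclDistToSet (z : ℝ × ℝ) (R : Set (ℝ × ℝ)) : ℝ :=
  sInf (euclDist z '' R)

lemma merge_clamp {a b t x : ℝ} (hab : a ≤ b) (hx1 : a ≤ x) (hx2 : x ≤ b) :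
    |max a (min b t) - t| ≤ |x - t| ∧
      (|x - t| ≤ |max a (min b t) - t| → x = max a (min b t)) := by
  rcases le_total t a with h1 | h1
  · rw [min_eq_right (h1.trans hab), max_eq_left h1,
      abs_of_nonneg (by linarith), abs_of_nonneg (by linarith)]
    exact ⟨by linarith, fun h => by linarith⟩
  · rcases le_total b t with h2 | h2
    · rw [min_eq_left h2, max_eq_right hab,
        abs_of_nonpos (by linarith), abs_of_nonpos (by linarith)]
      exact ⟨by linarith, fun h => by linarith⟩
    · rw [min_eq_right h2, max_eq_right h1, sub_self, abs_zero]
      refine ⟨abs_nonneg _, fun h => ?_⟩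
      have h0 : |x - t| = 0 := le_antisymm h (abs_nonneg _)
      have := abs_eq_zero.mp h0
      linarith

lemma distRay (p : ℝ) (hp0 : 0 < p) (hp1 : p < 1) (z : ℝ × ℝ)
    (hx : 0 ≤ z.1) (hy : 0 ≤ z.2) :
    euclDistToSet z (priorityRay p) =
      |(1 - p) * z.1 - p * z.2| / Real.sqrt (p ^ 2 + (1 - p) ^ 2) := by
  have hM : (0:ℝ) < p ^ 2 + (1 - p) ^ 2 := by nlinarith
  have hN : 0 < Real.sqrt (p ^ 2 + (1 - p) ^ 2) := Real.sqrt_pos.mpr hM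
  apply le_antisymm
  · -- upper bound: project onto the ray
    have hkey : euclDist z ((p * z.1 + (1 - p) * z.2) / (p ^ 2 + (1 - p) ^ 2) * p,
        (p * z.1 + (1 - p) * z.2) / (p ^ 2 + (1 - p) ^ 2) * (1 - p)) =
        |(1 - p) * z.1 - p * z.2| / Real.sqrt (p ^ 2 + (1 - p) ^ 2) := by
      unfold euclDist
      have h1 : (z.1 - (p * z.1 + (1 - p) * z.2) / (p ^ 2 + (1 - p) ^ 2) * p) ^ 2 +
          (z.2 - (p * z.1 + (1 - p) * z.2) / (p ^ 2 + (1 - p) ^ 2) * (1 - p)) ^ 2 =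
          ((1 - p) * z.1 - p * z.2) ^ 2 / (p ^ 2 + (1 - p) ^ 2) := by
        field_simp
        ring
      rw [h1, Real.sqrt_div (sq_nonneg _), Real.sqrt_sq_eq_abs]
    refine csInf_le ⟨0, ?_⟩ ?_
    · rintro r ⟨w, _, rfl⟩
      exact Real.sqrt_nonneg _
    · have h1p : (0:ℝ) ≤ 1 - p := by linarith
      have hA : 0 ≤ p * z.1 + (1 - p) * z.2 :=
        add_nonneg (mul_nonneg hp0.le hx) (mul_nonneg h1p hy)
      exact ⟨_, ⟨mul_nonneg (div_nonneg hA hM.le) hp0.le,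
        mul_nonneg (div_nonneg hA hM.le) h1p, by ring⟩, hkey⟩
  · -- lower bound
    refine le_csInf ⟨euclDist z (0, 0), ⟨(0, 0), ⟨le_refl 0, le_refl 0, by ring⟩, rfl⟩⟩ ?_
    rintro r ⟨w, ⟨hw1, hw2, hw3⟩, rfl⟩
    have key : (1 - p) * z.1 - p * z.2 =
        (1 - p) * (z.1 - w.1) - p * (z.2 - w.2) := by linear_combination hw3
    rw [div_le_iff₀ hN]
    have h1 : euclDist z w * Real.sqrt (p ^ 2 + (1 - p) ^ 2) =
        Real.sqrt (((z.1 - w.1) ^ 2 + (z.2 - w.2) ^ 2) * (p ^ 2 + (1 - p) ^ 2)) := by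
      rw [euclDist, ← Real.sqrt_mul (by positivity)]
    rw [h1, ← Real.sqrt_sq_eq_abs, key]
    apply Real.sqrt_le_sqrt
    nlinarith [sq_nonneg (p * (z.1 - w.1) + (1 - p) * (z.2 - w.2))]

lemma omega_char (D4 D5 S6 : ℝ) (hD4 : 0 ≤ D4) (hD5 : 0 ≤ D5) (hS6 : 0 ≤ S6) :
    mergeOmega D4 D5 S6 =
      {z | z ∈ mergeK D4 D5 S6 ∧ z.1 + z.2 = min (D4 + D5) S6} := by
  have hw0 : ∃ w ∈ mergeK D4 D5 S6, w.1 + w.2 = min (D4 + D5) S6 := by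
    rcases le_total (D4 + D5) S6 with h | h
    · exact ⟨(D4, D5), ⟨hD4, le_refl _, hD5, le_refl _, h⟩, by simp [min_eq_left h]⟩
    · refine ⟨(min D4 S6, S6 - min D4 S6), ⟨le_min hD4 hS6, min_le_left _ _, ?_, ?_, by simp⟩, ?_⟩
      · simp [sub_nonneg, min_le_right D4 S6]
      · show S6 - min D4 S6 ≤ D5
        rcases le_total D4 S6 with h' | h'
        · rw [min_eq_left h']; linarith
        · rw [min_eq_right h']; linarith
      · simp [min_eq_right h]
  ext z
  constructor
  · rintro ⟨⟨h1, h2, h3, h4, h5⟩, hmax⟩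
    refine ⟨⟨h1, h2, h3, h4, h5⟩, le_antisymm (le_min (by linarith) h5) ?_⟩
    obtain ⟨w, hwK, hw⟩ := hw0
    rw [← hw]
    exact hmax w hwK
  · rintro ⟨hzK, hsum⟩
    refine ⟨hzK, fun w hwK => ?_⟩
    obtain ⟨h1, h2, h3, h4, h5⟩ := hwK
    rw [hsum]
    exact le_min (by linarith) h5

/-- There exists a unique point of `Ω` minimizing the Euclidean distance to the
priority ray `R`: the merge solution is well defined. -/
theorem merge_projection_unique
    (p D4 D5 S6 : ℝ) (hp0 : 0 < p) (hp1 : p < 1)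
    (hD4 : 0 ≤ D4) (hD5 : 0 ≤ D5) (hS6 : 0 ≤ S6) :
    ∃! z : ℝ × ℝ, z ∈ mergeOmega D4 D5 S6 ∧
      ∀ w ∈ mergeOmega D4 D5 S6,
        euclDistToSet z (priorityRay p) ≤ euclDistToSet w (priorityRay p) := by
  set c := min (D4 + D5) S6 with hc
  have hc0 : 0 ≤ c := le_min (by linarith) hS6
  have hcS : c ≤ S6 := min_le_right _ _
  have hcD : c ≤ D4 + D5 := min_le_left _ _
  set a := max 0 (c - D5) with ha
  set b := min D4 c with hb
  have h0a : (0:ℝ) ≤ a := le_max_left _ _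
  have haD : c - D5 ≤ a := le_max_right _ _
  have hbD : b ≤ D4 := min_le_left _ _
  have hbc : b ≤ c := min_le_right _ _
  have hab : a ≤ b := max_le (le_min hD4 hc0) (le_min (by linarith) (by linarith))
  set xs := max a (min b (p * c)) with hxs
  have hxsa : a ≤ xs := le_max_left _ _
  have hxsb : xs ≤ b := max_le hab (min_le_left _ _)
  have hN : 0 < Real.sqrt (p ^ 2 + (1 - p) ^ 2) := Real.sqrt_pos.mpr (by nlinarith)
  have hOm := omega_char D4 D5 S6 hD4 hD5 hS6
  have hbnd : ∀ z ∈ mergeOmega D4 D5 S6, a ≤ z.1 ∧ z.1 ≤ b ∧ z.2 = c - z.1 := by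
    intro z hz
    rw [hOm] at hz
    obtain ⟨⟨h1, h2, h3, h4, h5⟩, hsum⟩ := hz
    exact ⟨max_le h1 (by linarith), le_min h2 (by linarith), by linarith⟩
  have hdist : ∀ z ∈ mergeOmega D4 D5 S6,
      euclDistToSet z (priorityRay p) = |z.1 - p * c| / Real.sqrt (p ^ 2 + (1 - p) ^ 2) := by
    intro z hz
    obtain ⟨h1, h2, h3⟩ := hbnd z hz
    have hz1 : 0 ≤ z.1 := le_trans h0a h1
    have hz2 : 0 ≤ z.2 := by
      have : z.1 ≤ c := le_trans h2 hbc
      linarith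
    rw [distRay p hp0 hp1 z hz1 hz2]
    congr 1
    rw [h3]
    ring
  have hzsOm : ((xs, c - xs) : ℝ × ℝ) ∈ mergeOmega D4 D5 S6 := by
    rw [hOm]
    refine ⟨⟨le_trans h0a hxsa, le_trans hxsb hbD, ?_, ?_, ?_⟩, by simp [hc]⟩
    · simp only [sub_nonneg]
      exact le_trans hxsb hbc
    · have : c - D5 ≤ xs := le_trans haD hxsa
      simp only []
      linarith
    · simp only []
      linarith
  refine ⟨(xs, c - xs), ⟨hzsOm, ?_⟩, ?_⟩
  · intro w hw
    rw [hdist _ hzsOm, hdist _ hw]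
    obtain ⟨hw1, hw2, _⟩ := hbnd w hw
    have hcl := (merge_clamp (t := p * c) hab hw1 hw2).1
    rw [← hxs] at hcl
    gcongr
  · rintro z ⟨hzOm, hzmin⟩
    have h1 := hzmin _ hzsOm
    rw [hdist _ hzOm, hdist _ hzsOm] at h1
    have h2 : |z.1 - p * c| ≤ |xs - p * c| := by
      have := mul_le_mul_of_nonneg_right h1 hN.le
      rwa [div_mul_cancel₀ _ hN.ne', div_mul_cancel₀ _ hN.ne'] at this
    obtain ⟨hz1, hz2, hz3⟩ := hbnd z hzOm
    have hcl := (merge_clamp (t := p * c) hab hz1 hz2).2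
    rw [← hxs] at hcl
    have hx1 := hcl h2
    have : z = (z.1, z.2) := rfl
    rw [this, hx1, hz3, hx1]
end

section
/- Fix a right-of-way parameter p ∈ (0,1) and nonnegative reals D₄, D₅ and S₆ with S₆ < D₄ + D₅, and suppose that the point (p·S₆, (1−p)·S₆) is not feasible, i.e. p·S₆ > D₄ or (1−p)·S₆ > D₅. Let K = {(x,y) ∈ ℝ² : 0 ≤ x ≤ D₄, 0 ≤ y ≤ D₅, x + y ≤ S₆}, let Ω be the set of maximizers of x + y over K, let R = {(x,y) ∈ ℝ² : x ≥ 0, y ≥ 0, (1−p)·x = p·y}, and let (x*, y*) be the unique point of Ω minimizing the Euclidean distance to R. Then x* + y* = S₆ and exactly one of the following holds: either x* = D₄ < p·S₆ and y* = S₆ − D₄ > (1−p)·S₆, or y* = D₅ < (1−p)·S₆ and x* = S₆ − D₅ > p·S₆. -/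
lemma dist_ray_eq (p : ℝ) (z : ℝ × ℝ) (hp0 : 0 < p) (hp1 : p < 1)
    (h1 : 0 ≤ z.1) (h2 : 0 ≤ z.2) :
    euclDistToSet z (priorityRay p)
      = |(1 - p) * z.1 - p * z.2| / Real.sqrt (p ^ 2 + (1 - p) ^ 2) := by
  set N : ℝ := p ^ 2 + (1 - p) ^ 2 with hNdef
  have hN : 0 < N := by nlinarith
  have hsN : 0 < Real.sqrt N := Real.sqrt_pos.mpr hN
  set c : ℝ := (1 - p) * z.1 - p * z.2 with hc
  apply le_antisymm
  · -- upper bound: distance to the foot of the perpendicular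
    set t : ℝ := (p * z.1 + (1 - p) * z.2) / N with ht
    have htnn : 0 ≤ t := by
      apply div_nonneg _ hN.le
      have : 0 ≤ p * z.1 := mul_nonneg hp0.le h1
      nlinarith
    have hmem : (t * p, t * (1 - p)) ∈ priorityRay p := by
      refine ⟨mul_nonneg htnn hp0.le, mul_nonneg htnn (by linarith), by ring⟩
    have hval : euclDist z (t * p, t * (1 - p)) = |c| / Real.sqrt N := by
      have h1' : z.1 - t * p = (1 - p) * c / N := by
        rw [ht, hc]; field_simp; rw [hNdef]; ring
      have h2' : z.2 - t * (1 - p) = -(p * c) / N := by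
        rw [ht, hc]; field_simp; rw [hNdef]; ring
      unfold euclDist
      rw [h1', h2']
      have : ((1 - p) * c / N) ^ 2 + (-(p * c) / N) ^ 2 = c ^ 2 / N := by
        field_simp; ring
      rw [this, Real.sqrt_div (sq_nonneg c), Real.sqrt_sq_eq_abs]
    calc euclDistToSet z (priorityRay p) ≤ euclDist z (t * p, t * (1 - p)) := by
          apply csInf_le
          · exact ⟨0, by rintro x ⟨r, _, rfl⟩; exact Real.sqrt_nonneg _⟩
          · exact ⟨_, hmem, rfl⟩
      _ = |c| / Real.sqrt N := hval
  · apply le_csInf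
    · exact ⟨_, ⟨(0, 0), ⟨le_refl 0, le_refl 0, by ring⟩, rfl⟩⟩
    · rintro x ⟨r, ⟨hr1, hr2, hr3⟩, rfl⟩
      rw [div_le_iff₀ hsN]
      have hc' : c = (1 - p) * (z.1 - r.1) - p * (z.2 - r.2) := by
        rw [hc]; linarith [hr3]
      have key : c ^ 2 ≤ N * ((z.1 - r.1) ^ 2 + (z.2 - r.2) ^ 2) := by
        rw [hc', hNdef]
        nlinarith [sq_nonneg ((1 - p) * (z.2 - r.2) + p * (z.1 - r.1))]
      calc |c| = Real.sqrt (c ^ 2) := (Real.sqrt_sq_eq_abs c).symm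
        _ ≤ Real.sqrt (N * ((z.1 - r.1) ^ 2 + (z.2 - r.2) ^ 2)) := Real.sqrt_le_sqrt key
        _ = euclDist z r * Real.sqrt N := by
            rw [Real.sqrt_mul hN.le]; unfold euclDist; ring

/-- In the case where the priority rule is incompatible with flow maximization
(`(p·S₆, (1−p)·S₆)` infeasible and `S₆ < D₄ + D₅`), the merge solution
`(x*, y*)` satisfies `x* + y* = S₆` and exactly one of:
`x* = D₄ < p·S₆` with `y* = S₆ − D₄ > (1−p)·S₆`, or
`y* = D₅ < (1−p)·S₆` with `x* = S₆ − D₅ > p·S₆`. -/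
theorem merge_solution_incompatible_case
    (p D4 D5 S6 : ℝ) (hp0 : 0 < p) (hp1 : p < 1)
    (hD4 : 0 ≤ D4) (hD5 : 0 ≤ D5) (hS6 : 0 ≤ S6)
    (hsum : S6 < D4 + D5)
    (hinfeas : D4 < p * S6 ∨ D5 < (1 - p) * S6)
    (z : ℝ × ℝ) (hz : z ∈ mergeOmega D4 D5 S6)
    (hmin : ∀ w ∈ mergeOmega D4 D5 S6,
      euclDistToSet z (priorityRay p) ≤ euclDistToSet w (priorityRay p)) :
    z.1 + z.2 = S6 ∧
    Xor' (z.1 = D4 ∧ D4 < p * S6 ∧ z.2 = S6 - D4 ∧ (1 - p) * S6 < z.2)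
         (z.2 = D5 ∧ D5 < (1 - p) * S6 ∧ z.1 = S6 - D5 ∧ p * S6 < z.1) := by
  obtain ⟨hzK, hzmax⟩ := hz
  obtain ⟨hz1, hz1D, hz2, hz2D, hzS⟩ := hzK
  have hN : (0:ℝ) < p ^ 2 + (1 - p) ^ 2 := by nlinarith
  have hsN : 0 < Real.sqrt (p ^ 2 + (1 - p) ^ 2) := Real.sqrt_pos.mpr hN
  by_cases hcase : D4 < p * S6
  · -- case x* = D4
    have hpS6 : p * S6 ≤ S6 := by nlinarith
    have hwK : ((D4, S6 - D4) : ℝ × ℝ) ∈ mergeK D4 D5 S6 :=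
      ⟨hD4, le_refl _, by simp; linarith, by simp; linarith, by simp⟩
    have hwO : ((D4, S6 - D4) : ℝ × ℝ) ∈ mergeOmega D4 D5 S6 :=
      ⟨hwK, fun w hw => by simp; exact hw.2.2.2.2⟩
    have hzsum : z.1 + z.2 = S6 := le_antisymm hzS (by simpa using hzmax _ hwK)
    have h := hmin _ hwO
    rw [dist_ray_eq p z hp0 hp1 hz1 hz2,
        dist_ray_eq p (D4, S6 - D4) hp0 hp1 hD4 (by simp; linarith)] at h
    have habs : |(1 - p) * z.1 - p * z.2| ≤ |(1 - p) * D4 - p * (S6 - D4)| :=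
      (div_le_div_iff_of_pos_right hsN).mp h
    have hps : p * (z.1 + z.2) = p * S6 := by rw [hzsum]
    rw [abs_of_nonpos (by nlinarith), abs_of_nonpos (by nlinarith)] at habs
    have hz1eq : z.1 = D4 := by nlinarith
    have hz2eq : z.2 = S6 - D4 := by linarith
    refine ⟨hzsum, Or.inl ⟨⟨hz1eq, hcase, hz2eq, by linarith⟩, ?_⟩⟩
    rintro ⟨h5, -, -, -⟩
    linarith
  · -- case y* = D5
    have hcase' : D5 < (1 - p) * S6 := hinfeas.resolve_left hcase
    have hpS6 : (1 - p) * S6 ≤ S6 := by nlinarith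
    have hwK : ((S6 - D5, D5) : ℝ × ℝ) ∈ mergeK D4 D5 S6 :=
      ⟨by simp; linarith, by simp; linarith, hD5, le_refl _, by simp⟩
    have hwO : ((S6 - D5, D5) : ℝ × ℝ) ∈ mergeOmega D4 D5 S6 :=
      ⟨hwK, fun w hw => by simp; exact hw.2.2.2.2⟩
    have hzsum : z.1 + z.2 = S6 := le_antisymm hzS (by simpa using hzmax _ hwK)
    have h := hmin _ hwO
    rw [dist_ray_eq p z hp0 hp1 hz1 hz2,
        dist_ray_eq p (S6 - D5, D5) hp0 hp1 (by simp; linarith) hD5] at h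
    have habs : |(1 - p) * z.1 - p * z.2| ≤ |(1 - p) * (S6 - D5) - p * D5| :=
      (div_le_div_iff_of_pos_right hsN).mp h
    have hps : p * (z.1 + z.2) = p * S6 := by rw [hzsum]
    rw [abs_of_nonneg (by nlinarith), abs_of_nonneg (by nlinarith)] at habs
    have hz2eq : z.2 = D5 := by nlinarith
    have hz1eq : z.1 = S6 - D5 := by linarith
    refine ⟨hzsum, Or.inr ⟨⟨hz2eq, hcase', hz1eq, by linarith⟩, ?_⟩⟩
    rintro ⟨h4, -, -, -⟩
    linarith
end

section
/- Let α₂, α₃, α₂′, α₃′ ∈ (0,1) with α₂ + α₃ = 1 and α₂′ + α₃′ = 1. Set q = (1, α₂, α₃), q′ = (1, α₂′, α₃′), and Q_{ij} = q_j/q_i, Q′_{ij} = q′_j/q′_i for i, j ∈ {1,2,3}. Then for every i, j ∈ {1,2,3} there exist A ∈ {1, α₂/α₂′, (α₂/α₂′)·(α₃′/α₃)} and a matrix M ∈ {Q, Q′} such that Q_{i2} · Q′_{2j} = A · M_{ij}. -/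
/-- Factorization identity (Step 3 of the proof of Theorem 1) eliminating the
middle link `I₂` from a sequence of wave-junction interactions: with `Q`, `Q'`
the matrices of tangent-vector multiplication factors for turning ratios
`(α₂, α₃)` and `(α₂', α₃')` respectively, the combined factor through the
middle link satisfies `Q i 2 · Q' 2 j = A · M i j` for some
`A ∈ {1, α₂/α₂', (α₂/α₂')·(α₃'/α₃)}` and `M ∈ {Q, Q'}`. -/
theorem middle_link_elimination
    (α₂ α₃ α₂' α₃' : ℝ)
    (h2 : α₂ ∈ Set.Ioo (0 : ℝ) 1) (h3 : α₃ ∈ Set.Ioo (0 : ℝ) 1)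
    (h2' : α₂' ∈ Set.Ioo (0 : ℝ) 1) (h3' : α₃' ∈ Set.Ioo (0 : ℝ) 1)
    (hsum : α₂ + α₃ = 1) (hsum' : α₂' + α₃' = 1)
    (q q' : Fin 3 → ℝ) (hq : q = ![1, α₂, α₃]) (hq' : q' = ![1, α₂', α₃'])
    (Q Q' : Fin 3 → Fin 3 → ℝ)
    (hQ : ∀ i j, Q i j = q j / q i) (hQ' : ∀ i j, Q' i j = q' j / q' i) :
    ∀ i j : Fin 3, ∃ A ∈ ({1, α₂ / α₂', (α₂ / α₂') * (α₃' / α₃)} : Set ℝ),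
      ∃ M : Fin 3 → Fin 3 → ℝ, (M = Q ∨ M = Q') ∧
        Q i 1 * Q' 1 j = A * M i j := by
  have h2p := h2.1.ne'
  have h3p := h3.1.ne'
  have h2p' := h2'.1.ne'
  have h3p' := h3'.1.ne'
  intro i j
  fin_cases i
  · refine ⟨α₂ / α₂', by simp, Q', Or.inr rfl, ?_⟩
    simp only [hQ, hQ', hq, hq']
    simp only [Fin.zero_eta, Fin.mk_one, Fin.reduceFinMk, Matrix.cons_val_zero, Matrix.cons_val_one, Matrix.cons_val_two, Matrix.head_cons, Matrix.tail_cons]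
    field_simp
  · refine ⟨1, by simp, Q', Or.inr rfl, ?_⟩
    simp only [hQ, hQ', hq, hq']
    simp only [Fin.zero_eta, Fin.mk_one, Fin.reduceFinMk, Matrix.cons_val_zero, Matrix.cons_val_one, Matrix.cons_val_two, Matrix.head_cons, Matrix.tail_cons]
    field_simp
  · refine ⟨(α₂ / α₂') * (α₃' / α₃), by simp, Q', Or.inr rfl, ?_⟩
    simp only [hQ, hQ', hq, hq']
    simp only [Fin.zero_eta, Fin.mk_one, Fin.reduceFinMk, Matrix.cons_val_zero, Matrix.cons_val_one, Matrix.cons_val_two, Matrix.head_cons, Matrix.tail_cons]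
    field_simp
end
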